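/- arXiv:math/0412015 — 3 statements merged into one kernel-verified Lean document; each statement's English description precedes it below -/
import Mathlib

section
/- (Corollary 4) For all positive integers m, n, p, q, and r, the identity \(\sum_{a=1}^{pm-r}\sum_{b=1}^{qn-r}\binom{pm+qm-a+b-1}{pm-r-a}\binom{pn+qn+a-b-1}{qn-r-b}+\sum_{a=1}^{pn-r}\sum_{b=1}^{qm-r}\binom{pn+qn-a+b-1}{pn-r-a}\binom{pm+qm+a-b-1}{qm-r-b}=\frac{2pqmn}{(p+q)(m+n)}\binom{pm+qm}{pm}\binom{pn+qn}{pn}-r\binom{(p+q)(m+n)}{pm+pn}+\sum_{k=1-r}^{r-1}(r-|k|)\binom{pm+qm}{pm-k}\binom{pn+qn}{qn-k}\) holds (as an identity of rational numbers), where k ranges over integers, sums over empty ranges are 0, and a binomial coefficient with negative lower index is 0. -/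
/-- Binomial coefficient with natural upper index and integer lower index,
equal to `0` when the lower index is negative. -/
def chooseZ (N : ℕ) (k : ℤ) : ℕ :=
  if k < 0 then 0 else N.choose k.toNat


open Finset

def cz (n : ℕ) (k : ℤ) : ℚ := (chooseZ n k : ℚ)

lemma cz_neg {n : ℕ} {k : ℤ} (h : k < 0) : cz n k = 0 := by
  simp [cz, chooseZ, h]

lemma cz_of_gt {n : ℕ} {k : ℤ} (h : (n : ℤ) < k) : cz n k = 0 := by
  have h0 : ¬ k < 0 := by omega
  have h1 : n < k.toNat := by omega
  simp [cz, chooseZ, h0, Nat.choose_eq_zero_of_lt h1]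

lemma cz_natCast (n j : ℕ) : cz n (j : ℤ) = (n.choose j : ℚ) := by
  simp [cz, chooseZ]

lemma cz_zero (n : ℕ) : cz n 0 = 1 := by
  simpa using cz_natCast n 0

lemma cz_pascal (n : ℕ) (k : ℤ) : cz (n + 1) k = cz n k + cz n (k - 1) := by
  rcases lt_or_ge k 0 with h | h
  · rw [cz_neg h, cz_neg h, cz_neg (by omega)]; ring
  · obtain ⟨j, rfl⟩ := Int.eq_ofNat_of_zero_le h
    cases j with
    | zero => simp [cz_zero, cz_neg (show (-1:ℤ) < 0 by norm_num)]
    | succ i =>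
      have : ((i + 1 : ℕ) : ℤ) - 1 = (i : ℤ) := by push_cast; ring
      rw [this, cz_natCast, cz_natCast, cz_natCast, Nat.choose_succ_succ]
      push_cast; ring

lemma cz_symm (n : ℕ) (k : ℤ) : cz n k = cz n ((n : ℤ) - k) := by
  rcases lt_or_ge k 0 with h | h
  · rw [cz_neg h, cz_of_gt (show (n:ℤ) < (n:ℤ) - k by omega)]
  · rcases le_or_gt k (n : ℤ) with h2 | h2
    · obtain ⟨j, rfl⟩ := Int.eq_ofNat_of_zero_le h
      have hj : j ≤ n := by exact_mod_cast h2
      have : (n : ℤ) - (j : ℤ) = ((n - j : ℕ) : ℤ) := by omega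
      rw [this, cz_natCast, cz_natCast, Nat.choose_symm hj]
    · rw [cz_of_gt h2, cz_neg (by omega)]

lemma cz_succ_mul (n : ℕ) (k : ℤ) :
    ((k : ℚ) + 1) * cz n (k + 1) = ((n : ℚ) - (k : ℚ)) * cz n k := by
  rcases lt_or_ge k 0 with h | h
  · rcases eq_or_lt_of_le (by omega : k ≤ -1) with h1 | h1
    · rw [h1]; simp [cz_neg (show (-1:ℤ) < 0 by omega)]
    · rw [cz_neg h, cz_neg (by omega : k + 1 < 0)]; ring
  · obtain ⟨j, rfl⟩ := Int.eq_ofNat_of_zero_le h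
    rcases lt_or_ge j n with h2 | h2
    · have : ((j : ℤ)) + 1 = ((j + 1 : ℕ) : ℤ) := by push_cast; ring
      rw [this, cz_natCast, cz_natCast]
      have hcast : ((n.choose (j+1) * (j+1) : ℕ) : ℚ) = ((n.choose j * (n - j) : ℕ) : ℚ) :=
        congrArg _ (Nat.choose_succ_right_eq n j)
      push_cast [Nat.cast_sub (le_of_lt h2)] at hcast
      push_cast
      linarith [hcast]
    · rcases eq_or_lt_of_le h2 with h3 | h3
      · rw [← h3]
        rw [cz_of_gt (by omega : ((n:ℕ):ℤ) < ((n:ℕ):ℤ) + 1)]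
        push_cast
        ring
      · rw [cz_of_gt (by exact_mod_cast h3 : (n:ℤ) < ((j:ℕ):ℤ)),
          cz_of_gt (by push_cast; omega : (n:ℤ) < ((j:ℕ):ℤ)+1)]
        ring

lemma cz_mul_self (n : ℕ) (k : ℤ) :
    (k : ℚ) * cz (n + 1) k = ((n : ℚ) + 1) * cz n (k - 1) := by
  rcases lt_or_ge k 0 with h | h
  · rw [cz_neg h, cz_neg (by omega : k - 1 < 0)]; ring
  · obtain ⟨j, rfl⟩ := Int.eq_ofNat_of_zero_le h
    cases j with
    | zero => simp [cz_neg (show (-1:ℤ) < 0 by norm_num)]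
    | succ i =>
      have : ((i + 1 : ℕ) : ℤ) - 1 = (i : ℤ) := by push_cast; ring
      rw [this, cz_natCast, cz_natCast]
      have hcast : (((n+1) * n.choose i : ℕ) : ℚ) = ((((n+1)).choose (i+1) * (i+1) : ℕ) : ℚ) :=
        congrArg _ (Nat.add_one_mul_choose_eq n i)
      push_cast at hcast ⊢
      linarith [hcast]
lemma sum_Icc_reflect (f : ℤ → ℚ) (c lo hi : ℤ) :
    ∑ k ∈ Icc lo hi, f (c - k) = ∑ k ∈ Icc (c - hi) (c - lo), f k := by
  apply Finset.sum_nbij' (fun k => c - k) (fun k => c - k)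
  · intro a ha; simp only [mem_Icc] at *; omega
  · intro a ha; simp only [mem_Icc] at *; omega
  · intro a _; omega
  · intro a _; omega
  · intro a _; rfl

lemma sum_Icc_shift (f : ℤ → ℚ) (d lo hi : ℤ) :
    ∑ k ∈ Icc lo hi, f (k + d) = ∑ k ∈ Icc (lo + d) (hi + d), f k := by
  apply Finset.sum_nbij' (fun k => k + d) (fun k => k - d)
  · intro a ha; simp only [mem_Icc] at *; omega
  · intro a ha; simp only [mem_Icc] at *; omega
  · intro a _; omega
  · intro a _; omega
  · intro a _; rfl

lemma sum_Icc_split (f : ℤ → ℚ) (lo mid hi : ℤ) (h1 : lo ≤ mid) (h2 : mid ≤ hi + 1) :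
    ∑ k ∈ Icc lo hi, f k = (∑ k ∈ Icc lo (mid - 1), f k) + ∑ k ∈ Icc mid hi, f k := by
  rw [← Finset.sum_union]
  · congr 1
    ext x
    simp only [mem_union, mem_Icc]
    omega
  · simp only [Finset.disjoint_left, mem_Icc]
    intro a ha ha2
    omega

lemma sum_Icc_to_range (f : ℤ → ℚ) (lo : ℤ) (n : ℕ) :
    ∑ k ∈ Icc lo (lo + n - 1), f k = ∑ i ∈ range n, f (lo + i) := by
  apply Finset.sum_nbij' (fun k => (k - lo).toNat) (fun i => lo + (i : ℤ))
  · intro a ha; simp only [mem_Icc, mem_range] at *; omega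
  · intro a ha; simp only [mem_Icc, mem_range] at *; omega
  · intro a ha; simp only [mem_Icc] at ha; omega
  · intro a _; omega
  · intro a ha; simp only [mem_Icc] at ha; congr 1; omega

lemma sum_tele (G : ℤ → ℚ) (lo : ℤ) (n : ℕ) :
    ∑ k ∈ Icc lo (lo + n - 1), (G k - G (k + 1)) = G lo - G (lo + n) := by
  rw [sum_Icc_to_range]
  have : ∀ i : ℕ, G (lo + i) - G (lo + i + 1) = G (lo + i) - G (lo + (i+1 : ℕ)) := by
    intro i; congr 2; push_cast; ring
  rw [Finset.sum_congr rfl (fun i _ => this i)]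
  simpa using Finset.sum_range_sub' (fun i => G (lo + i)) n

lemma hockey (f n : ℕ) : ∑ i ∈ range (n + 1), (f + i).choose i = (f + n + 1).choose n := by
  induction n with
  | zero => simp
  | succ n ih =>
    rw [Finset.sum_range_succ, ih]
    have h1 : f + (n+1) + 1 = (f + n + 1) + 1 := by ring
    have h2 : f + (n+1) = f + n + 1 := by ring
    rw [h1, h2, Nat.choose_succ_succ (f + n + 1) n]

lemma dv (e : ℕ) : ∀ (n f : ℕ),
    ∑ j ∈ range (n + 1), (e + j).choose j * (f + (n - j)).choose (n - j)
      = (e + f + n + 1).choose n := by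
  induction e with
  | zero =>
    intro n f
    have h1 : ∀ j : ℕ, (0 + j).choose j = 1 := by intro j; simp
    calc ∑ j ∈ range (n + 1), (0 + j).choose j * (f + (n - j)).choose (n - j)
        = ∑ j ∈ range (n + 1), (f + (n - j)).choose (n - j) := by
          apply Finset.sum_congr rfl; intro j _; rw [h1 j, one_mul]
      _ = ∑ j ∈ range (n + 1), (f + j).choose j := by
          have := Finset.sum_range_reflect (fun i => (f + i).choose i) (n + 1)
          rw [← this]
          apply Finset.sum_congr rfl
          intro j hj
          simp only [mem_range] at hj
          have h2 : n + 1 - 1 - j = n - j := by omega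
          rw [h2]
      _ = (0 + f + n + 1).choose n := by rw [hockey f n]; congr 1; omega
  | succ e ihe =>
    intro n
    induction n with
    | zero => intro f; simp
    | succ n ihn =>
      intro f
      rw [Finset.sum_range_succ']
      have hterm : ∀ j : ℕ, (e + 1 + (j+1)).choose (j+1) * (f + (n + 1 - (j+1))).choose (n + 1 - (j+1))
          = (e + 1 + j).choose j * (f + (n - j)).choose (n - j)
            + (e + (j+1)).choose (j+1) * (f + (n - j)).choose (n - j) := by
        intro j
        have h1 : e + 1 + (j + 1) = (e + 1 + j) + 1 := by ring
        rw [h1, Nat.choose_succ_succ (e + 1 + j) j]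
        have h2 : n + 1 - (j + 1) = n - j := by omega
        rw [h2, add_mul]
        congr 2
        · congr 1; omega
      rw [Finset.sum_congr rfl (fun j _ => hterm j), Finset.sum_add_distrib]
      have hA : ∑ j ∈ range (n + 1), (e + 1 + j).choose j * (f + (n - j)).choose (n - j)
          = (e + 1 + f + n + 1).choose n := ihn f
      have hihe := ihe (n+1) f
      rw [Finset.sum_range_succ'] at hihe
      have hidx : ∀ j : ℕ, (e + (j+1)).choose (j+1) * (f + (n + 1 - (j+1))).choose (n + 1 - (j+1))
          = (e + (j+1)).choose (j+1) * (f + (n - j)).choose (n - j) := by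
        intro j
        have h2 : n + 1 - (j + 1) = n - j := by omega
        rw [h2]
      rw [Finset.sum_congr rfl (fun j _ => hidx j),
        show e + f + (n+1) + 1 = e + f + n + 2 from by ring] at hihe
      rw [add_assoc]
      have hB : (∑ j ∈ range (n + 1), (e + (j+1)).choose (j+1) * (f + (n - j)).choose (n - j))
            + (e + 1 + 0).choose 0 * (f + (n + 1 - 0)).choose (n + 1 - 0)
          = (e + f + n + 2).choose (n+1) := by
        simp only [Nat.add_zero, Nat.choose_zero_right, Nat.sub_zero, one_mul] at hihe ⊢
        rw [← hihe]
      rw [hB, hA]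
      have hp := Nat.choose_succ_succ (e + f + n + 2) n
      simp only [Nat.succ_eq_add_one] at hp
      have h4 : e + 1 + f + n + 1 = e + f + n + 2 := by ring
      have h5 : e + 1 + f + (n + 1) + 1 = e + f + n + 3 := by ring
      have h6 : e + f + n + 2 + 1 = e + f + n + 3 := by ring
      rw [h4, h5]
      rw [h6] at hp
      omega

lemma czV (m : ℕ) : ∀ (n : ℕ) (c : ℤ),
    ∑ j ∈ Icc (0 : ℤ) m, cz m j * cz n (c - j) = cz (m + n) c := by
  induction m with
  | zero =>
    intro n c
    simp only [Nat.cast_zero, Icc_self, Finset.sum_singleton, cz_zero, one_mul, sub_zero,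
      Nat.zero_add]
  | succ m ih =>
    intro n c
    have hsplit : ∑ j ∈ Icc (0:ℤ) (m+1:ℕ), cz (m+1) j * cz n (c - j)
        = ∑ j ∈ Icc (0:ℤ) (m+1:ℕ), (cz m j * cz n (c - j) + cz m (j-1) * cz n (c - j)) := by
      apply Finset.sum_congr rfl
      intro j _
      rw [cz_pascal]; ring
    rw [hsplit, Finset.sum_add_distrib]
    have hc1 : ((m+1:ℕ) : ℤ) = (m:ℤ) + 1 := by push_cast; ring
    have h1 : ∑ j ∈ Icc (0:ℤ) (m+1:ℕ), cz m j * cz n (c - j) = cz (m + n) c := by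
      rw [hc1, sum_Icc_split _ 0 ((m:ℤ)+1) ((m:ℤ)+1) (by omega) (by omega)]
      have : ((m:ℤ) + 1 - 1) = (m:ℤ) := by ring
      rw [this, ih n c]
      have : ∑ k ∈ Icc ((m:ℤ)+1) ((m:ℤ)+1), cz m k * cz n (c - k) = 0 := by
        rw [Icc_self, Finset.sum_singleton, cz_of_gt (by omega), zero_mul]
      rw [this, add_zero]
    have h2 : ∑ j ∈ Icc (0:ℤ) (m+1:ℕ), cz m (j-1) * cz n (c - j) = cz (m + n) (c - 1) := by
      rw [hc1, sum_Icc_split _ 0 1 ((m:ℤ)+1) (by omega) (by omega)]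
      have hz : ∑ k ∈ Icc (0:ℤ) (1-1), cz m (k-1) * cz n (c - k) = 0 := by
        rw [show (1:ℤ)-1 = 0 by ring, Icc_self, Finset.sum_singleton,
          show (0:ℤ)-1 = -1 by ring, cz_neg (by norm_num), zero_mul]
      rw [hz, zero_add]
      have hsh : ∑ k ∈ Icc (1:ℤ) ((m:ℤ)+1), cz m (k-1) * cz n (c - k)
          = ∑ k ∈ Icc (0:ℤ) (m:ℤ), cz m k * cz n ((c-1) - k) := by
        have hs := sum_Icc_shift (fun k => cz m (k-1) * cz n (c - k)) 1 0 (m:ℤ)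
        rw [show (0:ℤ)+1 = 1 by ring] at hs
        rw [← hs]
        apply Finset.sum_congr rfl
        intro k _
        have e1 : k + 1 - 1 = k := by ring
        have e2 : c - (k + 1) = (c - 1) - k := by ring
        rw [e1, e2]
      rw [hsh, ih n (c-1)]
    rw [h1, h2, ← cz_pascal]
    congr 1
    omega
def LL (u v s t : ℕ) : ℚ :=
  ∑ i ∈ range s, ∑ j ∈ range t,
    (((u + i + (t - 1 - j)).choose i * (v + (s - 1 - i) + j).choose j : ℕ) : ℚ)

noncomputable def RR (u v s t : ℕ) : ℚ :=
  ∑ k ∈ Icc (1 : ℤ) (s : ℤ), (k : ℚ) * (cz (u + s) ((s : ℤ) - k) * cz (v + t) ((t : ℤ) - k))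

lemma LLrec (u v s t : ℕ) :
    LL (u+1) v (s+1) t = LL u v (s+1) t + LL (u+1) v s t := by
  have peel : ∀ (w : ℕ),
      LL w v (s+1) t = (∑ i ∈ range s, ∑ j ∈ range t,
          (((w + (i+1) + (t-1-j)).choose (i+1) * (v + (s-1-i) + j).choose j : ℕ) : ℚ))
        + ∑ j ∈ range t, (((v + s + j).choose j : ℕ) : ℚ) := by
    intro w
    unfold LL
    rw [Finset.sum_range_succ' (fun i => ∑ j ∈ range t,
      (((w + i + (t - 1 - j)).choose i * (v + (s + 1 - 1 - i) + j).choose j : ℕ) : ℚ)) s]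
    congr 1
    · apply Finset.sum_congr rfl; intro i _
      apply Finset.sum_congr rfl; intro j _
      have h1 : s + 1 - 1 - (i+1) = s - 1 - i := by omega
      rw [h1]
    · apply Finset.sum_congr rfl; intro j _
      have h1 : s + 1 - 1 - 0 = s := by omega
      have h2 : (w + 0 + (t-1-j)).choose 0 = 1 := Nat.choose_zero_right _
      rw [h1, h2, one_mul]
  rw [peel (u+1), peel u]
  have main : ∑ i ∈ range s, ∑ j ∈ range t,
        (((u+1 + (i+1) + (t-1-j)).choose (i+1) * (v + (s-1-i) + j).choose j : ℕ) : ℚ)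
      = LL (u+1) v s t + ∑ i ∈ range s, ∑ j ∈ range t,
        (((u + (i+1) + (t-1-j)).choose (i+1) * (v + (s-1-i) + j).choose j : ℕ) : ℚ) := by
    unfold LL
    rw [← Finset.sum_add_distrib]
    apply Finset.sum_congr rfl; intro i _
    rw [← Finset.sum_add_distrib]
    apply Finset.sum_congr rfl; intro j _
    have hN : (u+1+(i+1)+(t-1-j)).choose (i+1)
        = (u+1+i+(t-1-j)).choose i + (u+(i+1)+(t-1-j)).choose (i+1) := by
      have h1 : u+1+(i+1)+(t-1-j) = (u+1+i+(t-1-j)) + 1 := by omega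
      rw [h1, Nat.choose_succ_succ]
      congr 2
      omega
    rw [hN, add_mul]
    push_cast
    ring
  rw [main]
  ring

lemma RRrec (u v s t : ℕ) :
    RR (u+1) v (s+1) t = RR u v (s+1) t + RR (u+1) v s t := by
  unfold RR
  have hp : ∀ k ∈ Icc (1:ℤ) (((s:ℕ)+1 : ℕ) : ℤ),
      (k:ℚ) * (cz (u+1+(s+1)) ((((s:ℕ)+1:ℕ):ℤ) - k) * cz (v+t) ((t:ℤ)-k))
      = (k:ℚ) * (cz (u+(s+1)) ((((s:ℕ)+1:ℕ):ℤ) - k) * cz (v+t) ((t:ℤ)-k))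
        + (k:ℚ) * (cz (u+1+s) (((s:ℕ):ℤ) - k) * cz (v+t) ((t:ℤ)-k)) := by
    intro k _
    have h1 : u+1+(s+1) = (u+(s+1)) + 1 := by ring
    rw [h1, cz_pascal]
    have h2 : (((s:ℕ)+1:ℕ):ℤ) - k - 1 = (s:ℤ) - k := by push_cast; ring
    rw [h2]
    have h3 : u+(s+1) = u+1+s := by ring
    rw [h3, ← h3]
    ring
  rw [Finset.sum_congr rfl hp, Finset.sum_add_distrib]
  congr 1
  have hc : (((s:ℕ)+1:ℕ):ℤ) = (s:ℤ) + 1 := by push_cast; ring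
  rw [hc, sum_Icc_split (fun k => (k:ℚ) * (cz (u+1+s) (((s:ℕ):ℤ) - k) * cz (v+t) ((t:ℤ)-k)))
    1 ((s:ℤ)+1) ((s:ℤ)+1) (by omega) (by omega)]
  have hz : ∑ k ∈ Icc ((s:ℤ)+1) ((s:ℤ)+1),
      (k:ℚ) * (cz (u+1+s) (((s:ℕ):ℤ) - k) * cz (v+t) ((t:ℤ)-k)) = 0 := by
    rw [Icc_self, Finset.sum_singleton, cz_neg (by omega : (s:ℤ) - ((s:ℤ)+1) < 0)]
    ring
  rw [hz, add_zero, show (s:ℤ)+1-1 = (s:ℤ) by ring]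
lemma base (v s t : ℕ) : LL 0 v s t = RR 0 v s t := by
  rcases Nat.eq_zero_or_pos s with hs | hs
  · subst hs
    simp [LL, RR, show Icc (1:ℤ) ((0:ℕ):ℤ) = ∅ from Finset.Icc_eq_empty (by norm_num)]
  rcases Nat.eq_zero_or_pos t with ht | ht
  · subst ht
    have h1 : LL 0 v s 0 = 0 := by simp [LL]
    have h2 : RR 0 v s 0 = 0 := by
      unfold RR
      apply Finset.sum_eq_zero
      intro k hk
      simp only [mem_Icc] at hk
      rw [cz_neg (by omega : ((0:ℕ):ℤ) - k < 0)]
      ring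
    rw [h1, h2]
  -- main case
  set K := s + v + t - 1 with hK
  -- ℕ-level evaluation of the double sum
  have hN : (∑ i ∈ range s, ∑ j ∈ range t,
      (0 + i + (t - 1 - j)).choose i * (v + (s - 1 - i) + j).choose j)
      + v * K.choose (t-1) = t * K.choose t := by
    have hswap : (∑ i ∈ range s, ∑ j ∈ range t,
        (0 + i + (t - 1 - j)).choose i * (v + (s - 1 - i) + j).choose j)
        = ∑ j ∈ range t, ∑ i ∈ range s,
        (0 + i + (t - 1 - j)).choose i * (v + (s - 1 - i) + j).choose j :=
      Finset.sum_comm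
    have hfull : ∀ j ∈ range t,
        (∑ i ∈ range s, (0 + i + (t - 1 - j)).choose i * (v + (s - 1 - i) + j).choose j)
        + (∑ a ∈ range v, ((t-1-j) + (s+a)).choose (s+a) * ((j + (v-1-a)).choose (v-1-a)))
        = K.choose t := by
      intro j hj
      simp only [mem_range] at hj
      have hdv := dv (t-1-j) (v+s-1) j
      rw [show v+s-1+1 = s+v from by omega] at hdv
      rw [Finset.sum_range_add (fun α => ((t-1-j) + α).choose α
        * ((j + (v+s-1-α)).choose (v+s-1-α))) s v] at hdv
      have e1 : (∑ i ∈ range s, ((t-1-j) + i).choose i * ((j + (v+s-1-i)).choose (v+s-1-i)))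
          = ∑ i ∈ range s, (0 + i + (t - 1 - j)).choose i * (v + (s - 1 - i) + j).choose j := by
        apply Finset.sum_congr rfl
        intro i hi
        simp only [mem_range] at hi
        have a1 : (t-1-j) + i = 0 + i + (t-1-j) := by omega
        have a2 : j + (v+s-1-i) = v + (s-1-i) + j := by omega
        have a3 : (v + (s-1-i) + j) - j = v+s-1-i := by omega
        rw [a1, a2]
        congr 1
        rw [← a3, Nat.choose_symm (by omega)]
      have e2 : (∑ a ∈ range v, ((t-1-j) + (s+a)).choose (s+a)
            * ((j + (v+s-1-(s+a))).choose (v+s-1-(s+a))))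
          = ∑ a ∈ range v, ((t-1-j) + (s+a)).choose (s+a) * ((j + (v-1-a)).choose (v-1-a)) := by
        apply Finset.sum_congr rfl
        intro a ha
        simp only [mem_range] at ha
        have : v+s-1-(s+a) = v-1-a := by omega
        rw [this]
      rw [e1, e2] at hdv
      rw [hdv]
      have : t-1-j + j + (v+s-1) + 1 = K := by omega
      rw [this]
      rw [← Nat.choose_symm (show t ≤ K by omega)]
      congr 1
      omega
    have hmiss : (∑ j ∈ range t, ∑ a ∈ range v,
        ((t-1-j) + (s+a)).choose (s+a) * ((j + (v-1-a)).choose (v-1-a)))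
        = v * K.choose (t-1) := by
      rw [Finset.sum_comm]
      rw [Finset.sum_congr rfl (fun a ha => ?_), Finset.sum_const, card_range, smul_eq_mul]
      have e3 : ∀ j ∈ range t, ((t-1-j) + (s+a)).choose (s+a) * ((j + (v-1-a)).choose (v-1-a))
          = ((v-1-a) + j).choose j * ((s+a) + ((t-1) - j)).choose ((t-1) - j) := by
        intro j hj
        simp only [mem_range] at hj
        simp only [mem_range] at ha
        have c1 : ((v-1-a)+j).choose (((v-1-a)+j) - (v-1-a)) = ((v-1-a)+j).choose (v-1-a) :=
          Nat.choose_symm (by omega)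
        rw [show ((v-1-a)+j) - (v-1-a) = j from by omega] at c1
        have c2 : ((s+a) + ((t-1)-j)).choose (((s+a) + ((t-1)-j)) - (s+a))
            = ((s+a) + ((t-1)-j)).choose (s+a) := Nat.choose_symm (by omega)
        rw [show ((s+a) + ((t-1)-j)) - (s+a) = (t-1)-j from by omega] at c2
        rw [show (t-1-j) + (s+a) = (s+a) + ((t-1)-j) from by omega,
          show j + (v-1-a) = (v-1-a) + j from by omega, ← c1, ← c2]
        ring
      rw [Finset.sum_congr rfl e3]
      have hdv2 := dv (v-1-a) (t-1) (s+a)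
      rw [show t-1+1 = t from by omega] at hdv2
      rw [hdv2]
      congr 1
      simp only [mem_range] at ha
      omega
    calc (∑ i ∈ range s, ∑ j ∈ range t,
        (0 + i + (t - 1 - j)).choose i * (v + (s - 1 - i) + j).choose j) + v * K.choose (t-1)
        = (∑ j ∈ range t, ∑ i ∈ range s,
            (0 + i + (t - 1 - j)).choose i * (v + (s - 1 - i) + j).choose j)
          + (∑ j ∈ range t, ∑ a ∈ range v,
            ((t-1-j) + (s+a)).choose (s+a) * ((j + (v-1-a)).choose (v-1-a))) := by
          rw [hswap, hmiss]
      _ = ∑ j ∈ range t, K.choose t := by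
          rw [← Finset.sum_add_distrib]
          exact Finset.sum_congr rfl hfull
      _ = t * K.choose t := by rw [Finset.sum_const, card_range, smul_eq_mul]
  -- deduce ℕ value of the double sum
  have hfin : (∑ i ∈ range s, ∑ j ∈ range t,
      (0 + i + (t - 1 - j)).choose i * (v + (s - 1 - i) + j).choose j)
      = s * K.choose (t-1) := by
    have hp := Nat.choose_succ_right_eq K (t-1)
    rw [show t-1+1 = t from by omega, show K - (t-1) = s + v from by omega] at hp
    -- hp : K.choose t * t = K.choose (t-1) * (s+v)
    have h6 : t * K.choose t = s * K.choose (t-1) + v * K.choose (t-1) := by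
      rw [mul_comm, hp]; ring
    rw [h6] at hN
    exact Nat.add_right_cancel hN
  -- RR side
  have hRR : RR 0 v s t = (s : ℚ) * (((s-1) + (v+t)).choose (t-1) : ℚ) := by
    unfold RR
    obtain ⟨s', hs'⟩ : ∃ s', s = s' + 1 := ⟨s-1, by omega⟩
    have e4 : ∀ k ∈ Icc (1:ℤ) (s:ℤ), (k:ℚ) * (cz (0+s) ((s:ℤ)-k) * cz (v+t) ((t:ℤ)-k))
        = (s:ℚ) * (cz (s-1) (k-1) * cz (v+t) ((t:ℤ)-k)) := by
      intro k hk
      have c1 : cz (0+s) ((s:ℤ)-k) = cz s k := by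
        rw [Nat.zero_add, ← cz_symm]
      rw [c1]
      have c2 : (k:ℚ) * cz s k = (s:ℚ) * cz (s-1) (k-1) := by
        rw [hs', show s'+1-1 = s' from by omega]
        have := cz_mul_self s' k
        push_cast at this ⊢
        linarith [this]
      rw [← mul_assoc, c2, mul_assoc]
    rw [Finset.sum_congr rfl e4, ← Finset.mul_sum]
    congr 1
    have e5 : ∀ k ∈ Icc (1:ℤ) (s:ℤ), cz (s-1) (k-1) * cz (v+t) ((t:ℤ)-k)
        = cz (s-1) (k + (-1)) * cz (v+t) (((t:ℤ)-1) - (k + (-1))) := by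
      intro k _
      rw [show k + (-1) = k - 1 from by ring,
        show ((t:ℤ)-1) - (k-1) = (t:ℤ) - k from by ring]
    rw [Finset.sum_congr rfl e5,
      sum_Icc_shift (fun x => cz (s-1) x * cz (v+t) (((t:ℤ)-1) - x)) (-1) 1 (s:ℤ)]
    rw [show (1:ℤ) + (-1) = 0 from by ring, show (s:ℤ) + (-1) = ((s-1:ℕ):ℤ) from by omega]
    rw [czV (s-1) (v+t) ((t:ℤ)-1)]
    rw [show (t:ℤ)-1 = ((t-1:ℕ):ℤ) from by omega, cz_natCast]
  -- LL side cast
  have hQ : ((∑ i ∈ range s, ∑ j ∈ range t,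
      (0 + i + (t - 1 - j)).choose i * (v + (s - 1 - i) + j).choose j : ℕ) : ℚ)
      = ((s * K.choose (t-1) : ℕ) : ℚ) := congrArg (fun x : ℕ => (x : ℚ)) hfin
  have hLL : LL 0 v s t = (s : ℚ) * ((K.choose (t-1) : ℕ) : ℚ) := by
    unfold LL
    push_cast at hQ ⊢
    exact hQ
  rw [hLL, hRR, show s - 1 + (v + t) = K from by omega]
lemma CL (v t : ℕ) : ∀ u s, LL u v s t = RR u v s t := by
  intro u
  induction u with
  | zero => intro s; exact base v s t
  | succ u ihu =>
    intro s
    induction s with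
    | zero =>
      simp [LL, RR, show Icc (1:ℤ) ((0:ℕ):ℤ) = ∅ from Finset.Icc_eq_empty (by norm_num)]
    | succ s ihs =>
      rw [LLrec, RRrec, ihu (s+1), ihs]

lemma sum_Icc_nat (s : ℕ) (h : ℕ → ℚ) : ∑ a ∈ Icc 1 s, h a = ∑ i ∈ range s, h (s - i) := by
  apply Finset.sum_nbij' (fun a => s - a) (fun i => s - i)
  · intro a ha; simp only [mem_Icc, mem_range] at *; omega
  · intro a ha; simp only [mem_Icc, mem_range] at *; omega
  · intro a ha; simp only [mem_Icc] at ha; omega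
  · intro a ha; simp only [mem_range] at ha; omega
  · intro a ha; simp only [mem_Icc] at ha; congr 1; omega

lemma piece (x y z w r : ℕ) (hr : 1 ≤ r) (K : ℤ) (hK : (x:ℤ) ≤ K) :
    (∑ a ∈ Icc 1 (x - r), ∑ b ∈ Icc 1 (w - r),
      ((Nat.choose (x + y - a + b - 1) (x - r - a) : ℚ) *
        (Nat.choose (z + w + a - b - 1) (w - r - b) : ℚ)))
    = ∑ k ∈ Icc (r:ℤ) K, ((k:ℚ) - (r:ℚ)) * (cz (x+y) ((x:ℤ) - k) * cz (z+w) ((w:ℤ) - k)) := by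
  by_cases hd : r < x ∧ r < w
  · obtain ⟨hx, hw⟩ := hd
    have stepA : (∑ a ∈ Icc 1 (x - r), ∑ b ∈ Icc 1 (w - r),
        ((Nat.choose (x + y - a + b - 1) (x - r - a) : ℚ) *
          (Nat.choose (z + w + a - b - 1) (w - r - b) : ℚ))) = LL (y+r) (z+r) (x-r) (w-r) := by
      unfold LL
      rw [sum_Icc_nat (x-r)]
      apply Finset.sum_congr rfl
      intro i hi
      simp only [mem_range] at hi
      rw [sum_Icc_nat (w-r)]
      apply Finset.sum_congr rfl
      intro j hj
      simp only [mem_range] at hj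
      rw [show x + y - (x - r - i) + (w - r - j) - 1 = y + r + i + (w - r - 1 - j) from by omega,
        show x - r - (x - r - i) = i from by omega,
        show z + w + (x - r - i) - (w - r - j) - 1 = z + r + (x - r - 1 - i) + j from by omega,
        show w - r - (w - r - j) = j from by omega]
      push_cast
      ring
    rw [stepA, CL (z+r) (w-r) (y+r) (x-r)]
    unfold RR
    rw [show y + r + (x - r) = x + y from by omega, show z + r + (w - r) = z + w from by omega]
    have hterm : ∀ k ∈ Icc (1:ℤ) ((x-r : ℕ):ℤ),
        (k:ℚ) * (cz (x+y) (((x-r:ℕ):ℤ) - k) * cz (z+w) (((w-r:ℕ):ℤ) - k))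
        = (fun k' : ℤ => ((k':ℚ) - (r:ℚ)) * (cz (x+y) ((x:ℤ) - k') * cz (z+w) ((w:ℤ) - k'))) (k + (r:ℤ)) := by
      intro k _
      simp only []
      rw [show (x:ℤ) - (k + (r:ℤ)) = ((x-r:ℕ):ℤ) - k from by omega,
        show (w:ℤ) - (k + (r:ℤ)) = ((w-r:ℕ):ℤ) - k from by omega]
      push_cast
      ring
    rw [Finset.sum_congr rfl hterm,
      sum_Icc_shift (fun k' : ℤ => ((k':ℚ) - (r:ℚ)) * (cz (x+y) ((x:ℤ) - k') * cz (z+w) ((w:ℤ) - k')))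
        (r:ℤ) 1 ((x-r:ℕ):ℤ)]
    apply Finset.sum_subset
    · intro k hk
      simp only [mem_Icc] at *
      omega
    · intro k hk hnk
      simp only [mem_Icc] at hk hnk
      rcases lt_or_ge ((x:ℤ)) k with h1 | h1
      · rw [cz_neg (by omega : (x:ℤ) - k < 0)]
        ring
      · have : k = (r:ℤ) := by omega
        subst this
        push_cast
        ring
  · have hd' : x ≤ r ∨ w ≤ r := by omega
    have hL : (∑ a ∈ Icc 1 (x - r), ∑ b ∈ Icc 1 (w - r),
        ((Nat.choose (x + y - a + b - 1) (x - r - a) : ℚ) *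
          (Nat.choose (z + w + a - b - 1) (w - r - b) : ℚ))) = 0 := by
      rcases hd' with h | h
      · rw [show x - r = 0 from by omega]
        simp
      · rw [show w - r = 0 from by omega]
        simp
    have hR : ∑ k ∈ Icc (r:ℤ) K, ((k:ℚ) - (r:ℚ)) * (cz (x+y) ((x:ℤ) - k) * cz (z+w) ((w:ℤ) - k)) = 0 := by
      apply Finset.sum_eq_zero
      intro k hk
      simp only [mem_Icc] at hk
      rcases hd' with h | h
      · rcases lt_or_ge ((x:ℤ)) k with h1 | h1
        · rw [cz_neg (by omega : (x:ℤ) - k < 0)]; ring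
        · have : k = (r:ℤ) := by omega
          subst this
          push_cast; ring
      · rcases lt_or_ge ((w:ℤ)) k with h1 | h1
        · rw [cz_neg (by omega : (w:ℤ) - k < 0)]; ring
        · have : k = (r:ℤ) := by omega
          subst this
          push_cast; ring
    rw [hL, hR]
def Gf (MM NN : ℕ) (ss : ℤ) (j : ℤ) : ℚ :=
  (j:ℚ) * (((NN:ℚ) - ((ss:ℤ):ℚ)) + (j:ℚ)) * (cz MM j * cz NN (ss - j))

lemma tel (MM NN : ℕ) (AA : ℕ) (ss : ℤ) (hc : (MM:ℚ) * ((ss:ℤ):ℚ) = (AA:ℚ) * ((MM:ℚ) + (NN:ℚ)))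
    (j : ℤ) :
    ((MM:ℚ) + (NN:ℚ)) * (((j:ℚ) - (AA:ℚ)) * (cz MM j * cz NN (ss - j)))
      = Gf MM NN ss j - Gf MM NN ss (j+1) := by
  have h1 : ((j:ℚ) + 1) * cz MM (j+1) = ((MM:ℚ) - (j:ℚ)) * cz MM j := cz_succ_mul MM j
  have h2 : (((ss - j - 1 : ℤ):ℚ) + 1) * cz NN ((ss - j - 1) + 1)
      = ((NN:ℚ) - ((ss - j - 1 : ℤ):ℚ)) * cz NN (ss - j - 1) := cz_succ_mul NN (ss - j - 1)
  rw [show (ss - j - 1) + 1 = ss - j from by ring] at h2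
  have hc1 : ((ss - j - 1 : ℤ):ℚ) = ((ss:ℤ):ℚ) - (j:ℚ) - 1 := by push_cast; ring
  rw [hc1] at h2
  unfold Gf
  rw [show ss - (j+1) = ss - j - 1 from by ring]
  have hcast : ((j+1 : ℤ):ℚ) = (j:ℚ) + 1 := by push_cast; ring
  rw [hcast]
  linear_combination (((NN:ℚ) - ((ss:ℤ):ℚ) + (j:ℚ) + 1) * cz NN (ss - j - 1)) * h1
    - (((MM:ℚ) - (j:ℚ)) * cz MM j) * h2
    + (cz MM j * cz NN (ss - j)) * hc

lemma Spos (MM NN a c : ℕ) (hc : MM * c = a * NN) (K : ℤ) (hK : (a:ℤ) < K) :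
    ((MM:ℚ) + (NN:ℚ)) * ∑ k ∈ Icc (1:ℤ) K, (k:ℚ) * (cz MM ((a:ℤ) - k) * cz NN ((c:ℤ) + k))
    = (a:ℚ) * ((NN:ℚ) - (c:ℚ)) * (cz MM (a:ℤ) * cz NN (c:ℤ)) := by
  set ss : ℤ := (a:ℤ) + (c:ℤ) with hss
  have hcQ : (MM:ℚ) * ((ss:ℤ):ℚ) = (a:ℚ) * ((MM:ℚ) + (NN:ℚ)) := by
    have h0 := congrArg (fun x : ℕ => (x:ℚ)) hc
    push_cast at h0
    rw [hss]
    push_cast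
    linarith [h0]
  rw [Finset.mul_sum]
  have hterm : ∀ k ∈ Icc (1:ℤ) K,
      ((MM:ℚ)+(NN:ℚ)) * ((k:ℚ) * (cz MM ((a:ℤ) - k) * cz NN ((c:ℤ) + k)))
      = (fun j : ℤ => Gf MM NN ss (j+1) - Gf MM NN ss j) ((a:ℤ) - k) := by
    intro k _
    simp only []
    have ht := tel MM NN a ss hcQ ((a:ℤ) - k)
    rw [show ss - ((a:ℤ) - k) = (c:ℤ) + k from by rw [hss]; ring] at ht
    rw [show (((a:ℤ) - k : ℤ):ℚ) = (a:ℚ) - (k:ℚ) from by push_cast; ring] at ht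
    linarith [ht]
  rw [Finset.sum_congr rfl hterm]
  have hrefl := sum_Icc_reflect (fun j : ℤ => Gf MM NN ss (j+1) - Gf MM NN ss j) (a:ℤ) 1 K
  rw [hrefl]
  set n : ℕ := K.toNat with hn
  have hnK : (n:ℤ) = K := by omega
  have hbound : (a:ℤ) - 1 = ((a:ℤ) - K) + n - 1 := by omega
  rw [hbound]
  have htel := sum_tele (fun j => - Gf MM NN ss j) ((a:ℤ) - K) n
  have hconv : ∑ j ∈ Icc ((a:ℤ) - K) (((a:ℤ) - K) + n - 1), (Gf MM NN ss (j+1) - Gf MM NN ss j)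
      = ∑ j ∈ Icc ((a:ℤ) - K) (((a:ℤ) - K) + n - 1), (- Gf MM NN ss j - - Gf MM NN ss (j+1)) := by
    apply Finset.sum_congr rfl
    intro j _
    ring
  rw [hconv, htel]
  have hz : Gf MM NN ss ((a:ℤ) - K) = 0 := by
    unfold Gf
    rw [cz_neg (by omega : (a:ℤ) - K < 0)]
    ring
  rw [show ((a:ℤ) - K) + n = (a:ℤ) from by omega, hz]
  unfold Gf
  rw [show ss - (a:ℤ) = (c:ℤ) from by rw [hss]; ring]
  rw [hss]
  push_cast
  ring
theorem guo_zeng_corollary4 (m n p q r : ℕ) (hm : 0 < m) (hn : 0 < n)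
    (hp : 0 < p) (hq : 0 < q) (hr : 0 < r) :
    (∑ a ∈ Finset.Icc 1 (p * m - r), ∑ b ∈ Finset.Icc 1 (q * n - r),
      ((Nat.choose (p * m + q * m - a + b - 1) (p * m - r - a) : ℚ) *
        (Nat.choose (p * n + q * n + a - b - 1) (q * n - r - b) : ℚ))) +
    (∑ a ∈ Finset.Icc 1 (p * n - r), ∑ b ∈ Finset.Icc 1 (q * m - r),
      ((Nat.choose (p * n + q * n - a + b - 1) (p * n - r - a) : ℚ) *
        (Nat.choose (p * m + q * m + a - b - 1) (q * m - r - b) : ℚ))) =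
    2 * (p * q * m * n : ℚ) / ((p + q) * (m + n)) *
      (Nat.choose (p * m + q * m) (p * m) : ℚ) *
      (Nat.choose (p * n + q * n) (p * n) : ℚ) -
    (r : ℚ) * (Nat.choose ((p + q) * (m + n)) (p * m + p * n) : ℚ) +
    ∑ k ∈ Finset.Icc (1 - (r : ℤ)) ((r : ℤ) - 1),
      ((r : ℚ) - |(k : ℚ)|) * (chooseZ (p * m + q * m) ((p * m : ℤ) - k) : ℚ) *
        (chooseZ (p * n + q * n) ((q * n : ℤ) - k) : ℚ) := by
  have hr1 : 1 ≤ r := hr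
  set Kn : ℕ := p*m + q*m + (p*n + q*n) + r with hKn
  have hS1 := piece (p*m) (q*m) (p*n) (q*n) r hr1 ((Kn:ℤ)) (by push_cast; omega)
  have hS2 := piece (p*n) (q*n) (p*m) (q*m) r hr1 ((Kn:ℤ)) (by push_cast; omega)
  rw [hS1, hS2]
  push_cast
  -- abbreviations
  set D : ℤ → ℚ := fun k => cz (p*m+q*m) ((p:ℤ)*(m:ℤ) - k) * cz (p*n+q*n) ((q:ℤ)*(n:ℤ) - k) with hD
  -- reflect the second sum
  have e3 : (∑ k ∈ Icc ((r:ℕ):ℤ) (Kn:ℤ), ((k:ℚ) - (r:ℚ)) *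
        (cz (p*n+q*n) ((p:ℤ)*(n:ℤ) - k) * cz (p*m+q*m) ((q:ℤ)*(m:ℤ) - k)))
      = ∑ k ∈ Icc (-(Kn:ℤ)) (-((r:ℕ):ℤ)), ((-(k:ℚ)) - (r:ℚ)) * D k := by
    have hre := sum_Icc_reflect (fun j : ℤ => ((-(j:ℚ)) - (r:ℚ)) * D j) 0 ((r:ℕ):ℤ) (Kn:ℤ)
    rw [show (0:ℤ) - (Kn:ℤ) = -(Kn:ℤ) from by ring, show (0:ℤ) - ((r:ℕ):ℤ) = -((r:ℕ):ℤ) from by ring] at hre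
    rw [← hre]
    apply Finset.sum_congr rfl
    intro k hk
    simp only [hD]
    rw [cz_symm (p*n+q*n) ((p:ℤ)*(n:ℤ) - k),
      show ((p*n+q*n:ℕ):ℤ) - ((p:ℤ)*(n:ℤ) - k) = (q:ℤ)*(n:ℤ) - (0 - k) from by push_cast; ring,
      cz_symm (p*m+q*m) ((q:ℤ)*(m:ℤ) - k),
      show ((p*m+q*m:ℕ):ℤ) - ((q:ℤ)*(m:ℤ) - k) = (p:ℤ)*(m:ℤ) - (0 - k) from by push_cast; ring]
    push_cast
    ring
  rw [e3]
  -- split W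
  have e4 : ∑ k ∈ Icc (-(Kn:ℤ)) (Kn:ℤ), (|(k:ℚ)| - (r:ℚ)) * D k
      = (∑ k ∈ Icc (-(Kn:ℤ)) (-((r:ℕ):ℤ)), ((-(k:ℚ)) - (r:ℚ)) * D k)
        + (∑ k ∈ Icc (1 - ((r:ℕ):ℤ)) (((r:ℕ):ℤ) - 1), (|(k:ℚ)| - (r:ℚ)) * D k)
        + ∑ k ∈ Icc ((r:ℕ):ℤ) (Kn:ℤ), ((k:ℚ) - (r:ℚ)) * D k := by
    rw [sum_Icc_split (fun k => (|(k:ℚ)| - (r:ℚ)) * D k) (-(Kn:ℤ)) (1 - ((r:ℕ):ℤ)) (Kn:ℤ)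
        (by omega) (by omega),
      sum_Icc_split (fun k => (|(k:ℚ)| - (r:ℚ)) * D k) (1 - ((r:ℕ):ℤ)) ((r:ℕ):ℤ) (Kn:ℤ)
        (by omega) (by omega)]
    rw [show (1 - ((r:ℕ):ℤ)) - 1 = -((r:ℕ):ℤ) from by ring]
    rw [← add_assoc]
    congr 1
    · congr 1
      apply Finset.sum_congr rfl
      intro k hk
      simp only [mem_Icc] at hk
      have : |(k:ℚ)| = -(k:ℚ) := by
        rw [abs_of_nonpos]
        exact_mod_cast (by omega : (k:ℤ) ≤ 0)
      rw [this]
    · apply Finset.sum_congr rfl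
      intro k hk
      simp only [mem_Icc] at hk
      have : |(k:ℚ)| = (k:ℚ) := by
        rw [abs_of_nonneg]
        exact_mod_cast (by omega : (0:ℤ) ≤ k)
      rw [this]
  -- chooseZ -> cz in goal
  simp only [show ∀ x : ℤ, ((chooseZ (p*m+q*m) x : ℕ) : ℚ) = cz (p*m+q*m) x from fun _ => rfl,
    show ∀ x : ℤ, ((chooseZ (p*n+q*n) x : ℕ) : ℚ) = cz (p*n+q*n) x from fun _ => rfl]
  have hT1D : (∑ k ∈ Icc ((r:ℕ):ℤ) (Kn:ℤ), ((k:ℚ) - (r:ℚ)) *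
      (cz (p*m+q*m) ((p:ℤ)*(m:ℤ) - k) * cz (p*n+q*n) ((q:ℤ)*(n:ℤ) - k)))
      = ∑ k ∈ Icc ((r:ℕ):ℤ) (Kn:ℤ), ((k:ℚ) - (r:ℚ)) * D k := rfl
  rw [hT1D]
  have hSmall : (∑ k ∈ Icc (1 - ((r:ℕ):ℤ)) (((r:ℕ):ℤ) - 1),
        ((r:ℚ) - |(k:ℚ)|) * cz (p*m+q*m) ((p:ℤ)*(m:ℤ) - k) * cz (p*n+q*n) ((q:ℤ)*(n:ℤ) - k))
      + (∑ k ∈ Icc (1 - ((r:ℕ):ℤ)) (((r:ℕ):ℤ) - 1), (|(k:ℚ)| - (r:ℚ)) * D k) = 0 := by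
    rw [← Finset.sum_add_distrib]
    apply Finset.sum_eq_zero
    intro k _
    simp only [hD]
    ring
  have eWD : ∑ k ∈ Icc (-(Kn:ℤ)) (Kn:ℤ), (|(k:ℚ)| - (r:ℚ)) * D k
      = (∑ k ∈ Icc (-(Kn:ℤ)) (Kn:ℤ), |(k:ℚ)| * D k)
        - (r:ℚ) * ∑ k ∈ Icc (-(Kn:ℤ)) (Kn:ℤ), D k := by
    rw [Finset.mul_sum, ← Finset.sum_sub_distrib]
    apply Finset.sum_congr rfl
    intro k _
    ring
  have hDrefl : ∀ k ∈ Icc (-(Kn:ℤ)) (Kn:ℤ), D k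
      = (fun j : ℤ => cz (p*m+q*m) j * cz (p*n+q*n) (((p:ℤ)*m + (p:ℤ)*n) - j)) ((p:ℤ)*m - k) := by
    intro k _
    simp only [hD]
    rw [cz_symm (p*n+q*n) ((q:ℤ)*(n:ℤ) - k),
      show ((p*n+q*n:ℕ):ℤ) - ((q:ℤ)*(n:ℤ) - k)
        = ((p:ℤ)*m + (p:ℤ)*n) - ((p:ℤ)*m - k) from by push_cast; ring]
  have eFull : ∑ k ∈ Icc (-(Kn:ℤ)) (Kn:ℤ), D k
      = cz ((p*m+q*m) + (p*n+q*n)) ((p:ℤ)*m + (p:ℤ)*n) := by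
    rw [Finset.sum_congr rfl hDrefl,
      sum_Icc_reflect (fun j : ℤ => cz (p*m+q*m) j * cz (p*n+q*n) (((p:ℤ)*m + (p:ℤ)*n) - j))
        ((p:ℤ)*m) (-(Kn:ℤ)) (Kn:ℤ)]
    have hcov : ∑ j ∈ Icc ((p:ℤ)*m - (Kn:ℤ)) ((p:ℤ)*m - (-(Kn:ℤ))),
          cz (p*m+q*m) j * cz (p*n+q*n) (((p:ℤ)*m + (p:ℤ)*n) - j)
        = ∑ j ∈ Icc (0:ℤ) ((p*m+q*m:ℕ):ℤ),
          cz (p*m+q*m) j * cz (p*n+q*n) (((p:ℤ)*m + (p:ℤ)*n) - j) := by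
      symm
      apply Finset.sum_subset
      · intro x hx
        simp only [mem_Icc] at *
        omega
      · intro x hx hnx
        simp only [mem_Icc] at hx hnx
        rcases lt_or_ge x 0 with h1 | h1
        · rw [cz_neg h1]; ring
        · rw [cz_of_gt (by omega : ((p*m+q*m:ℕ):ℤ) < x)]; ring
    rw [hcov, czV (p*m+q*m) (p*n+q*n) ((p:ℤ)*m + (p:ℤ)*n)]
  have eAbs : ∑ k ∈ Icc (-(Kn:ℤ)) (Kn:ℤ), |(k:ℚ)| * D k
      = (∑ k ∈ Icc (-(Kn:ℤ)) (0:ℤ), (-(k:ℚ)) * D k)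
        + ∑ k ∈ Icc (1:ℤ) (Kn:ℤ), (k:ℚ) * D k := by
    rw [sum_Icc_split (fun k => |(k:ℚ)| * D k) (-(Kn:ℤ)) 1 (Kn:ℤ) (by omega) (by omega),
      show (1:ℤ) - 1 = 0 from by ring]
    congr 1
    · apply Finset.sum_congr rfl
      intro k hk
      simp only [mem_Icc] at hk
      rw [abs_of_nonpos (by exact_mod_cast (by omega : k ≤ 0) : (k:ℚ) ≤ 0)]
    · apply Finset.sum_congr rfl
      intro k hk
      simp only [mem_Icc] at hk
      rw [abs_of_nonneg (by exact_mod_cast (by omega : (0:ℤ) ≤ k) : (0:ℚ) ≤ (k:ℚ))]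
  have eS1 : (((p*m+q*m:ℕ):ℚ) + ((p*n+q*n:ℕ):ℚ)) * ∑ k ∈ Icc (1:ℤ) (Kn:ℤ), (k:ℚ) * D k
      = ((p*m:ℕ):ℚ) * (((p*n+q*n:ℕ):ℚ) - ((p*n:ℕ):ℚ))
        * (cz (p*m+q*m) ((p*m:ℕ):ℤ) * cz (p*n+q*n) ((p*n:ℕ):ℤ)) := by
    have hconv : ∀ k ∈ Icc (1:ℤ) (Kn:ℤ), (k:ℚ) * D k
        = (k:ℚ) * (cz (p*m+q*m) (((p*m:ℕ):ℤ) - k) * cz (p*n+q*n) (((p*n:ℕ):ℤ) + k)) := by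
      intro k _
      simp only [hD]
      rw [cz_symm (p*n+q*n) ((q:ℤ)*(n:ℤ) - k),
        show ((p*n+q*n:ℕ):ℤ) - ((q:ℤ)*(n:ℤ) - k) = ((p*n:ℕ):ℤ) + k from by push_cast; ring,
        show (p:ℤ)*(m:ℤ) - k = ((p*m:ℕ):ℤ) - k from by push_cast; ring]
    rw [Finset.sum_congr rfl hconv]
    exact Spos (p*m+q*m) (p*n+q*n) (p*m) (p*n) (by ring) (Kn:ℤ) (by push_cast; omega)
  have eS2refl : ∑ k ∈ Icc (-(Kn:ℤ)) (0:ℤ), (-(k:ℚ)) * D k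
      = ∑ j ∈ Icc (0:ℤ) (Kn:ℤ),
          (j:ℚ) * (cz (p*m+q*m) (((q*m:ℕ):ℤ) - j) * cz (p*n+q*n) (((q*n:ℕ):ℤ) + j)) := by
    have hre := sum_Icc_reflect (fun j : ℤ =>
      (j:ℚ) * (cz (p*m+q*m) (((q*m:ℕ):ℤ) - j) * cz (p*n+q*n) (((q*n:ℕ):ℤ) + j))) 0 (-(Kn:ℤ)) 0
    rw [show (0:ℤ) - 0 = 0 from rfl, show (0:ℤ) - (-(Kn:ℤ)) = (Kn:ℤ) from by ring] at hre
    rw [← hre]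
    apply Finset.sum_congr rfl
    intro k hk
    simp only [hD]
    rw [cz_symm (p*m+q*m) ((p:ℤ)*(m:ℤ) - k),
      show ((p*m+q*m:ℕ):ℤ) - ((p:ℤ)*(m:ℤ) - k) = ((q*m:ℕ):ℤ) - (0 - k) from by push_cast; ring,
      show (q:ℤ)*(n:ℤ) - k = ((q*n:ℕ):ℤ) + (0 - k) from by push_cast; ring]
    push_cast
    ring
  have eS2 : (((p*m+q*m:ℕ):ℚ) + ((p*n+q*n:ℕ):ℚ)) * ∑ k ∈ Icc (-(Kn:ℤ)) (0:ℤ), (-(k:ℚ)) * D k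
      = ((q*m:ℕ):ℚ) * (((p*n+q*n:ℕ):ℚ) - ((q*n:ℕ):ℚ))
        * (cz (p*m+q*m) ((q*m:ℕ):ℤ) * cz (p*n+q*n) ((q*n:ℕ):ℤ)) := by
    rw [eS2refl]
    have h0 : Icc (0:ℤ) (Kn:ℤ) = insert (0:ℤ) (Icc (1:ℤ) (Kn:ℤ)) := by
      ext x
      simp only [mem_Icc, mem_insert]
      omega
    rw [h0, Finset.sum_insert (by simp), Int.cast_zero, zero_mul, zero_add]
    exact Spos (p*m+q*m) (p*n+q*n) (q*m) (q*n) (by ring) (Kn:ℤ) (by push_cast; omega)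
  -- conversions
  have hXc : cz (p*m+q*m) ((q*m:ℕ):ℤ) = cz (p*m+q*m) ((p*m:ℕ):ℤ) := by
    rw [cz_symm (p*m+q*m) ((q*m:ℕ):ℤ),
      show ((p*m+q*m:ℕ):ℤ) - ((q*m:ℕ):ℤ) = ((p*m:ℕ):ℤ) from by push_cast; ring]
  have hYc : cz (p*n+q*n) ((q*n:ℕ):ℤ) = cz (p*n+q*n) ((p*n:ℕ):ℤ) := by
    rw [cz_symm (p*n+q*n) ((q*n:ℕ):ℤ),
      show ((p*n+q*n:ℕ):ℤ) - ((q*n:ℕ):ℤ) = ((p*n:ℕ):ℤ) from by push_cast; ring]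
  have hX : cz (p*m+q*m) ((p*m:ℕ):ℤ) = ((p*m+q*m).choose (p*m) : ℚ) := cz_natCast _ _
  have hY : cz (p*n+q*n) ((p*n:ℕ):ℤ) = ((p*n+q*n).choose (p*n) : ℚ) := cz_natCast _ _
  have hF : cz ((p*m+q*m) + (p*n+q*n)) ((p:ℤ)*m + (p:ℤ)*n)
      = (((p+q)*(m+n)).choose (p*m+p*n) : ℚ) := by
    rw [show (p:ℤ)*m + (p:ℤ)*n = ((p*m+p*n:ℕ):ℤ) from by push_cast; ring, cz_natCast,
      show (p*m+q*m) + (p*n+q*n) = (p+q)*(m+n) from by ring]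
  have hdiv : (∑ k ∈ Icc (-(Kn:ℤ)) (0:ℤ), (-(k:ℚ)) * D k)
        + (∑ k ∈ Icc (1:ℤ) (Kn:ℤ), (k:ℚ) * D k)
      = 2 * ((p:ℚ) * (q:ℚ) * (m:ℚ) * (n:ℚ)) / (((p:ℚ) + (q:ℚ)) * ((m:ℚ) + (n:ℚ)))
        * ((p*m+q*m).choose (p*m) : ℚ) * ((p*n+q*n).choose (p*n) : ℚ) := by
    rw [div_mul_eq_mul_div, div_mul_eq_mul_div, eq_div_iff (by
      have a1 : (0:ℚ) < (p:ℚ) + (q:ℚ) := by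
        have : (0:ℚ) < (p:ℚ) := by exact_mod_cast hp
        have : (0:ℚ) ≤ (q:ℚ) := by positivity
        linarith
      have a2 : (0:ℚ) < (m:ℚ) + (n:ℚ) := by
        have : (0:ℚ) < (m:ℚ) := by exact_mod_cast hm
        have : (0:ℚ) ≤ (n:ℚ) := by positivity
        linarith
      positivity)]
    rw [hXc, hYc, hX, hY] at eS2
    rw [hX, hY] at eS1
    push_cast at eS1 eS2 ⊢
    linear_combination eS1 + eS2
  have hLHS : (∑ k ∈ Icc ((r:ℕ):ℤ) (Kn:ℤ), ((k:ℚ) - (r:ℚ)) * D k)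
        + (∑ k ∈ Icc (-(Kn:ℤ)) (-((r:ℕ):ℤ)), ((-(k:ℚ)) - (r:ℚ)) * D k)
      = (∑ k ∈ Icc (-(Kn:ℤ)) (Kn:ℤ), (|(k:ℚ)| - (r:ℚ)) * D k)
        - ∑ k ∈ Icc (1 - ((r:ℕ):ℤ)) (((r:ℕ):ℤ) - 1), (|(k:ℚ)| - (r:ℚ)) * D k := by
    rw [e4]
    ring
  rw [hLHS, eWD, eAbs, hdiv, eFull, hF]
  linarith [hSmall]
end

section
/- (Theorem 3) Let m and n be positive integers and let x be a rational number with \(2x+m\neq 0\). Then \(\sum_{a=1}^{m}\sum_{b=1}^{n}\binom{x+m-a+b-1}{n+b-1}\binom{x+a-b-1}{n-b}=\frac{mn}{2x+m}\binom{2x+m}{2n}\). -/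
/-- The generalized binomial coefficient `x(x-1)⋯(x-k+1)/k!` for a rational `x`
and a natural number `k`. -/
noncomputable def qbinom (x : ℚ) (k : ℕ) : ℚ :=
  (∏ i ∈ Finset.range k, (x - (i : ℚ))) / (Nat.factorial k : ℚ)

open Finset Polynomial

lemma qbinom_congr {x y : ℚ} (k : ℕ) (h : x = y) : qbinom x k = qbinom y k := by rw [h]

lemma qbinom_zero (x : ℚ) : qbinom x 0 = 1 := by simp [qbinom]

lemma qbinom_pascal (x : ℚ) (k : ℕ) :
    qbinom (x + 1) (k + 1) = qbinom x (k + 1) + qbinom x k := by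
  have hf : (Nat.factorial (k+1) : ℚ) = (k+1) * Nat.factorial k := by
    push_cast [Nat.factorial_succ]; ring
  have h1 : ∏ i ∈ Finset.range (k+1), (x + 1 - (i : ℚ))
      = (x+1) * ∏ i ∈ Finset.range k, (x - (i : ℚ)) := by
    rw [Finset.prod_range_succ' (fun i => (x + 1 - (i : ℚ))), mul_comm]
    congr 1
    · norm_num
    · apply Finset.prod_congr rfl; intro i _; push_cast; ring
  have h2 : ∏ i ∈ Finset.range (k+1), (x - (i : ℚ))
      = (∏ i ∈ Finset.range k, (x - (i : ℚ))) * (x - k) := Finset.prod_range_succ _ _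
  have hk0 : (Nat.factorial k : ℚ) ≠ 0 := Nat.cast_ne_zero.2 (Nat.factorial_ne_zero k)
  have hk1 : ((k : ℚ) + 1) ≠ 0 := by positivity
  unfold qbinom
  rw [h1, h2, hf]
  field_simp
  ring

lemma qbinom_absorb (x : ℚ) (k : ℕ) :
    qbinom x (k + 1) * ((k : ℚ) + 1) = x * qbinom (x - 1) k := by
  have h1 : ∏ i ∈ Finset.range (k+1), (x - (i : ℚ))
      = x * ∏ i ∈ Finset.range k, (x - 1 - (i : ℚ)) := by
    rw [Finset.prod_range_succ' (fun i => (x - (i : ℚ))), mul_comm]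
    congr 1
    · norm_num
    · apply Finset.prod_congr rfl; intro i _; push_cast; ring
  have hf : (Nat.factorial (k+1) : ℚ) = (k+1) * Nat.factorial k := by
    push_cast [Nat.factorial_succ]; ring
  have hk0 : (Nat.factorial k : ℚ) ≠ 0 := Nat.cast_ne_zero.2 (Nat.factorial_ne_zero k)
  have hk1 : ((k : ℚ) + 1) ≠ 0 := by positivity
  unfold qbinom
  rw [h1, hf]
  field_simp

lemma qbinom_nat_lt {N k : ℕ} (h : N < k) : qbinom (N : ℚ) k = 0 := by
  unfold qbinom
  rw [Finset.prod_eq_zero (Finset.mem_range.2 h) (by simp)]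
  simp

/-- The key pointwise identity, a consequence of four Pascal relations. -/
lemma key_identity (P Q P' Q' : ℚ) (j k : ℕ) :
    (qbinom (Q-1) (j+1) * qbinom (P+1) (k+1) - qbinom Q (j+1) * qbinom P (k+1))
      + (qbinom (P'+1) (j+1) * qbinom (Q'-1) (k+1) - qbinom P' (j+1) * qbinom Q' (k+1))
    = (qbinom P' j * qbinom Q' (k+1) - qbinom (Q-1) j * qbinom (P+1) (k+1))
      - (qbinom (P'+1) (j+1) * qbinom (Q'-1) k - qbinom Q (j+1) * qbinom P k) := by
  have h1 : qbinom Q (j+1) = qbinom (Q-1) (j+1) + qbinom (Q-1) j := by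
    have := qbinom_pascal (Q-1) j; rw [show Q - 1 + 1 = Q by ring] at this; exact this
  have h2 : qbinom (P+1) (k+1) = qbinom P (k+1) + qbinom P k := qbinom_pascal P k
  have h3 : qbinom (P'+1) (j+1) = qbinom P' (j+1) + qbinom P' j := qbinom_pascal P' j
  have h4 : qbinom Q' (k+1) = qbinom (Q'-1) (k+1) + qbinom (Q'-1) k := by
    have := qbinom_pascal (Q'-1) k; rw [show Q' - 1 + 1 = Q' by ring] at this; exact this
  rw [h1, h2, h3, h4]; ring

/-- The inner sum `h(p, q)`. -/
noncomputable def hsum (n : ℕ) (p q : ℚ) : ℚ :=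
  ∑ b ∈ Finset.Icc 1 n, qbinom (q + b - 1) (n + b - 1) * qbinom (p - b) (n - b)

lemma hsum_shift (n : ℕ) (hn : 0 < n) (p q : ℚ) :
    hsum n (p+1) (q-1) + hsum n (q-1) (p+1) = hsum n p q + hsum n q p := by
  obtain ⟨N, rfl⟩ : ∃ N, n = N + 1 := ⟨n - 1, (Nat.succ_pred_eq_of_pos hn).symm⟩
  have hIcc : ∀ f : ℕ → ℚ, ∑ b ∈ Finset.Icc 1 (N+1), f b
      = ∑ i ∈ Finset.range (N+1), f (1+i) := by
    intro f
    rw [← Finset.Ico_add_one_right_eq_Icc, Finset.sum_Ico_eq_sum_range]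
    norm_num
  unfold hsum
  rw [hIcc, hIcc, hIcc, hIcc, ← Finset.sum_add_distrib, ← Finset.sum_add_distrib,
    ← sub_eq_zero, ← Finset.sum_sub_distrib]
  -- telescoping function
  set G : ℕ → ℚ := fun i => if i < N + 1 then
      qbinom (p+i) (N+i) * qbinom (q-1-i) (N-i)
        - qbinom (q+i-1) (N+i) * qbinom (p-i) (N-i)
    else 0 with hG
  have htel : ∑ i ∈ Finset.range (N+1), (G i - G (i+1)) = 0 := by
    rw [Finset.sum_range_sub' G (N+1)]
    rw [hG]
    simp only [if_pos (Nat.succ_pos N), if_neg (lt_irrefl (N+1))]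
    norm_num
    ring
  rw [← htel]
  apply Finset.sum_congr rfl
  intro i hi
  have hiN : i < N + 1 := Finset.mem_range.1 hi
  have hb1 : N + 1 + (1+i) - 1 = (N + i) + 1 := by omega
  rw [hb1]
  rcases Nat.lt_or_ge i N with hiltN | higeN
  · -- main case : i < N
    have hb2 : N + 1 - (1+i) = (N - (i+1)) + 1 := by omega
    have hGi : G i = qbinom (p+i) (N+i) * qbinom (q-1-i) ((N-(i+1))+1)
        - qbinom (q+i-1) (N+i) * qbinom (p-i) ((N-(i+1))+1) := by
      rw [hG]
      simp only [if_pos hiN]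
      rw [show N - i = (N-(i+1))+1 by omega]
    have hGi1 : G (i+1) = qbinom (p+(i+1 : ℕ)) ((N+i)+1) * qbinom (q-1-(i+1 : ℕ)) (N-(i+1))
        - qbinom (q+(i+1 : ℕ)-1) ((N+i)+1) * qbinom (p-(i+1 : ℕ)) (N-(i+1)) := by
      rw [hG]
      simp only [if_pos (by omega : i + 1 < N + 1)]
      rw [show N + (i+1) = (N+i)+1 by omega]
    rw [hb2, hGi, hGi1]
    have hk := key_identity (p - 1 - i) (q + i) (p + i) (q - 1 - i) (N + i) (N - (i+1))
    push_cast at hk ⊢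
    rw [show q - 1 + (1+(i:ℚ)) - 1 = (q + i) - 1 by ring,
      show p + 1 - (1+(i:ℚ)) = (p - 1 - i) + 1 by ring,
      show p + 1 + (1+(i:ℚ)) - 1 = (p + i) + 1 by ring,
      show q - 1 - (1+(i:ℚ)) = (q - 1 - i) - 1 by ring,
      show q + (1+(i:ℚ)) - 1 = q + i by ring,
      show p - (1+(i:ℚ)) = p - 1 - i by ring,
      show p + (1+(i:ℚ)) - 1 = p + i by ring,
      show q - (1+(i:ℚ)) = q - 1 - i by ring,
      show p + ((i:ℚ)+1) = (p + i) + 1 by ring,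
      show q - 1 - ((i:ℚ)+1) = (q - 1 - i) - 1 by ring,
      show q + ((i:ℚ)+1) - 1 = q + i by ring,
      show p - ((i:ℚ)+1) = p - 1 - i by ring,
      show q + (i:ℚ) - 1 = (q + i) - 1 by ring,
      show p - (i:ℚ) = p - 1 - i + 1 by ring]
    linear_combination hk
  · -- boundary case : i = N
    have hiN' : i = N := by omega
    have hb2 : N + 1 - (1+i) = 0 := by omega
    have hNi : ¬ (i + 1 < N + 1) := by omega
    have hGi : G i = qbinom (p+i) (N+i) * qbinom (q-1-i) 0
        - qbinom (q+i-1) (N+i) * qbinom (p-i) 0 := by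
      rw [hG]
      simp only [if_pos hiN]
      rw [show N - i = 0 by omega]
    have hGi1 : G (i+1) = 0 := by rw [hG]; simp only [if_neg hNi]
    rw [hb2, hGi, hGi1, qbinom_zero, qbinom_zero, qbinom_zero, qbinom_zero,
      qbinom_zero, qbinom_zero]
    have e1 : qbinom (p + i + 1) ((N+i)+1) = qbinom (p+i) ((N+i)+1) + qbinom (p+i) (N+i) :=
      qbinom_pascal (p + i) (N + i)
    have e2 : qbinom (q + i - 1 + 1) ((N+i)+1)
        = qbinom (q+i-1) ((N+i)+1) + qbinom (q+i-1) (N+i) :=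
      qbinom_pascal (q + i - 1) (N + i)
    push_cast
    rw [show q - 1 + (1+(i:ℚ)) - 1 = q + i - 1 by ring,
      show p + 1 + (1+(i:ℚ)) - 1 = p + i + 1 by ring,
      show q + (1+(i:ℚ)) - 1 = q + i - 1 + 1 by ring,
      show p + (1+(i:ℚ)) - 1 = p + i by ring,
      e1, e2]
    ring

lemma hsum_base_right (n : ℕ) (hn : 0 < n) (p : ℚ) :
    hsum n p ((n : ℚ) - 1) = 0 := by
  unfold hsum
  apply Finset.sum_eq_zero
  intro b hb
  obtain ⟨hb1, hbn⟩ := Finset.mem_Icc.1 hb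
  have : ((n : ℚ) - 1 + b - 1) = ((n + b - 2 : ℕ) : ℚ) := by
    push_cast [Nat.cast_sub (by omega : (2:ℕ) ≤ n + b)]
    ring
  rw [this, qbinom_nat_lt (by omega : n + b - 2 < n + b - 1)]
  ring

lemma hsum_base_left (n : ℕ) (hn : 0 < n) (q : ℚ) :
    hsum n ((n : ℚ) - 1) q = qbinom (q + n - 1) (2 * n - 1) := by
  unfold hsum
  rw [Finset.sum_eq_single n]
  · rw [Nat.sub_self, qbinom_zero, show n + n - 1 = 2 * n - 1 by omega]
    ring
  · intro b hb hbn
    obtain ⟨hb1, hbn'⟩ := Finset.mem_Icc.1 hb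
    have hblt : b < n := lt_of_le_of_ne hbn' hbn
    have : ((n : ℚ) - 1 - b) = ((n - 1 - b : ℕ) : ℚ) := by
      push_cast [Nat.cast_sub (by omega : b ≤ n - 1), Nat.cast_sub (by omega : 1 ≤ n)]
      ring
    rw [this, qbinom_nat_lt (by omega : n - 1 - b < n - b)]
    ring
  · intro hn'
    exact absurd (Finset.mem_Icc.2 ⟨hn, le_refl n⟩) hn'

/-- Polynomial whose evaluation at `y` is `qbinom (e*y + c) k`. -/
noncomputable def qbinomPoly (c e : ℚ) (k : ℕ) : Polynomial ℚ :=
  Polynomial.C (((Nat.factorial k : ℚ))⁻¹) *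
    ∏ i ∈ Finset.range k, (Polynomial.C e * Polynomial.X + Polynomial.C (c - i))

lemma qbinomPoly_eval (c e : ℚ) (k : ℕ) (y : ℚ) :
    (qbinomPoly c e k).eval y = qbinom (e * y + c) k := by
  unfold qbinomPoly qbinom
  rw [Polynomial.eval_mul, Polynomial.eval_C, Polynomial.eval_prod]
  rw [div_eq_inv_mul]
  congr 1
  apply Finset.prod_congr rfl
  intro i _
  simp only [Polynomial.eval_add, Polynomial.eval_mul, Polynomial.eval_C, Polynomial.eval_X]
  ring

/-- The symmetric sum has the closed form `C(p+q, 2n-1)`. -/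
lemma hsum_add_swap (n : ℕ) (hn : 0 < n) (p q : ℚ) :
    hsum n p q + hsum n q p = qbinom (p + q) (2 * n - 1) := by
  set s : ℚ := p + q with hs
  set P : Polynomial ℚ := ∑ b ∈ Finset.Icc 1 n,
      (qbinomPoly ((b : ℚ) - 1) 1 (n + b - 1) * qbinomPoly (s - b) (-1) (n - b)
        + qbinomPoly (s + b - 1) (-1) (n + b - 1) * qbinomPoly (-(b : ℚ)) 1 (n - b)) with hP
  have heval : ∀ y : ℚ, P.eval y = hsum n (s - y) y + hsum n y (s - y) := by
    intro y
    rw [hP, Polynomial.eval_finset_sum]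
    unfold hsum
    rw [← Finset.sum_add_distrib]
    apply Finset.sum_congr rfl
    intro b _
    rw [Polynomial.eval_add, Polynomial.eval_mul, Polynomial.eval_mul,
      qbinomPoly_eval, qbinomPoly_eval, qbinomPoly_eval, qbinomPoly_eval]
    rw [qbinom_congr (n+b-1) (show 1 * y + ((b:ℚ) - 1) = y + b - 1 by ring),
      qbinom_congr (n-b) (show -1 * y + (s - b) = (s - y) - b by ring),
      qbinom_congr (n+b-1) (show -1 * y + (s + b - 1) = (s - y) + b - 1 by ring),
      qbinom_congr (n-b) (show 1 * y + (-(b:ℚ)) = y - b by ring)]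
  have hshift : ∀ y : ℚ, P.eval (y + 1) = P.eval y := by
    intro y
    rw [heval, heval]
    have h := hsum_shift n hn y (s - y)
    rw [show s - (y + 1) = (s - y) - 1 by ring]
    linarith [h]
  have hnat : ∀ t : ℕ, P.eval ((n : ℚ) - 1 + t) = qbinom s (2 * n - 1) := by
    intro t
    induction t with
    | zero =>
      rw [Nat.cast_zero, add_zero, heval, hsum_base_right n hn, hsum_base_left n hn,
        qbinom_congr (2*n-1) (show s - ((n:ℚ) - 1) + n - 1 = s by ring)]
      ring
    | succ t ih =>
      rw [show ((n : ℚ) - 1 + (t + 1 : ℕ)) = ((n : ℚ) - 1 + t) + 1 by push_cast; ring,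
        hshift, ih]
  have hPC : P = Polynomial.C (qbinom s (2 * n - 1)) := by
    apply Polynomial.eq_of_infinite_eval_eq
    apply Set.infinite_of_injective_forall_mem
      (f := fun t : ℕ => (n : ℚ) - 1 + t)
    · intro a b hab
      simp only [add_right_inj] at hab
      exact_mod_cast hab
    · intro t
      simp only [Set.mem_setOf_eq, Polynomial.eval_C]
      exact hnat t
  have hq := heval q
  rw [hPC, Polynomial.eval_C] at hq
  rw [show s - q = p by rw [hs]; ring] at hq
  linarith [hq]

theorem guo_zeng_theorem3 (m n : ℕ) (hm : 0 < m) (hn : 0 < n) (x : ℚ)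
    (hx : 2 * x + m ≠ 0) :
    ∑ a ∈ Finset.Icc 1 m, ∑ b ∈ Finset.Icc 1 n,
      qbinom (x + m - a + b - 1) (n + b - 1) * qbinom (x + a - b - 1) (n - b) =
    (m * n : ℚ) / (2 * x + m) * qbinom (2 * x + m) (2 * n) := by
  have hinner : ∀ a ∈ Finset.Icc 1 m,
      (∑ b ∈ Finset.Icc 1 n,
        qbinom (x + m - a + b - 1) (n + b - 1) * qbinom (x + a - b - 1) (n - b))
      = hsum n (x + a - 1) (x + m - a) := by
    intro a _
    unfold hsum
    apply Finset.sum_congr rfl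
    intro b _
    rw [qbinom_congr (n+b-1) (show x + (m:ℚ) - a + (b:ℚ) - 1 = (x + m - a) + b - 1 by ring),
      qbinom_congr (n-b) (show x + (a:ℚ) - b - 1 = (x + a - 1) - b by ring)]
  rw [Finset.sum_congr rfl hinner]
  have hswap : ∑ a ∈ Finset.Icc 1 m, hsum n (x + a - 1) (x + m - a)
      = ∑ a ∈ Finset.Icc 1 m, hsum n (x + m - a) (x + a - 1) := by
    apply Finset.sum_nbij' (fun a => m + 1 - a) (fun a => m + 1 - a)
    · intro a ha; obtain ⟨h1, h2⟩ := Finset.mem_Icc.1 ha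
      exact Finset.mem_Icc.2 ⟨by omega, by omega⟩
    · intro a ha; obtain ⟨h1, h2⟩ := Finset.mem_Icc.1 ha
      exact Finset.mem_Icc.2 ⟨by omega, by omega⟩
    · intro a ha; obtain ⟨h1, h2⟩ := Finset.mem_Icc.1 ha; omega
    · intro a ha; obtain ⟨h1, h2⟩ := Finset.mem_Icc.1 ha; omega
    · intro a ha
      obtain ⟨h1, h2⟩ := Finset.mem_Icc.1 ha
      have hc : ((m + 1 - a : ℕ) : ℚ) = (m : ℚ) + 1 - a := by
        push_cast [Nat.cast_sub (by omega : a ≤ m + 1)]; ring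
      rw [hc, show x + (m:ℚ) - ((m:ℚ) + 1 - a) = x + (a:ℚ) - 1 by ring,
        show x + ((m:ℚ) + 1 - a) - 1 = x + (m:ℚ) - a by ring]
  have hpair : ∀ a ∈ Finset.Icc 1 m,
      hsum n (x + a - 1) (x + m - a) + hsum n (x + m - a) (x + a - 1)
        = qbinom (2 * x + m - 1) (2 * n - 1) := by
    intro a _
    rw [hsum_add_swap n hn,
      qbinom_congr (2*n-1) (show (x + (a:ℚ) - 1) + (x + (m:ℚ) - a) = 2 * x + m - 1 by ring)]
  have hdouble : (∑ a ∈ Finset.Icc 1 m, hsum n (x + a - 1) (x + m - a))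
      + (∑ a ∈ Finset.Icc 1 m, hsum n (x + a - 1) (x + m - a))
      = (m : ℚ) * qbinom (2 * x + m - 1) (2 * n - 1) := by
    nth_rewrite 2 [hswap]
    rw [← Finset.sum_add_distrib, Finset.sum_congr rfl hpair, Finset.sum_const,
      Nat.card_Icc]
    simp [nsmul_eq_mul]
  have habs : qbinom (2 * x + m) (2 * n) * (2 * (n:ℚ))
      = (2 * x + m) * qbinom (2 * x + m - 1) (2 * n - 1) := by
    have h := qbinom_absorb (2 * x + m) (2 * n - 1)
    rw [show (2 * n - 1) + 1 = 2 * n by omega] at h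
    have hc : ((2 * n - 1 : ℕ) : ℚ) + 1 = 2 * (n : ℚ) := by
      push_cast [Nat.cast_sub (by omega : 1 ≤ 2 * n)]; ring
    rw [hc] at h
    exact h
  have h2n : (2 * (n:ℚ)) ≠ 0 := by positivity
  have hqb : qbinom (2 * x + m) (2 * n)
      = (2 * x + m) * qbinom (2 * x + m - 1) (2 * n - 1) / (2 * (n:ℚ)) := by
    rw [eq_div_iff h2n]; exact habs
  rw [hqb, eq_comm, div_mul_div_comm, div_eq_iff (mul_ne_zero hx h2n)]
  linear_combination (-((2 * x + (m:ℚ)) * (n:ℚ))) * hdouble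
end

section
/- Let m and n be positive integers. Then for every rational number x, \(2\sum_{a=1}^{m}\sum_{b=1}^{n}\binom{x+a-1}{n+b-1}\binom{x+m-a}{n-b}=m\binom{2x+m-1}{2n-1}\). -/
open Finset

lemma descPochhammer_smeval_eq_prod (x : ℚ) (k : ℕ) :
    (descPochhammer ℤ k).smeval x = ∏ i ∈ Finset.range k, (x - (i : ℚ)) := by
  induction k with
  | zero => simp [descPochhammer_zero, Polynomial.smeval_one]
  | succ k ih =>
    rw [descPochhammer_succ_right, Polynomial.smeval_mul, ih, Finset.prod_range_succ,
      Polynomial.smeval_sub, Polynomial.smeval_X, Polynomial.smeval_natCast]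
    simp

lemma qbinom_eq_choose (x : ℚ) (k : ℕ) : qbinom x k = Ring.choose x k := by
  have h := Ring.descPochhammer_eq_factorial_smul_choose (R := ℚ) x k
  rw [descPochhammer_smeval_eq_prod] at h
  rw [qbinom, h, nsmul_eq_mul]
  field_simp

lemma qbinom_add (y z : ℚ) (k : ℕ) :
    qbinom (y + z) k = ∑ ij ∈ Finset.HasAntidiagonal.antidiagonal k, qbinom y ij.1 * qbinom z ij.2 := by
  simp only [qbinom_eq_choose]
  exact Ring.add_choose_eq k (mul_comm y z)

lemma split_lemma (y z : ℚ) (n : ℕ) (hn : 0 < n) :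
    ∑ b ∈ Finset.Icc 1 n, (qbinom y (n + b - 1) * qbinom z (n - b)
      + qbinom z (n + b - 1) * qbinom y (n - b)) = qbinom (y + z) (2 * n - 1) := by
  rw [qbinom_add, Finset.Nat.sum_antidiagonal_eq_sum_range_succ_mk]
  have h2n : 2 * n - 1 + 1 = n + n := by omega
  simp only [Nat.succ_eq_add_one, h2n]
  rw [Finset.sum_range_add]
  have hIcc : Finset.Icc 1 n = Finset.Ico 1 (n + 1) := by rw [Finset.Ico_add_one_right_eq_Icc]
  rw [hIcc, Finset.sum_Ico_eq_sum_range]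
  simp only [add_tsub_cancel_right]
  rw [Finset.sum_add_distrib, add_comm]
  congr 1
  · rw [← Finset.sum_range_reflect]
    refine Finset.sum_congr rfl fun i hi => ?_
    rw [Finset.mem_range] at hi
    have e1 : n + (1 + (n - 1 - i)) - 1 = 2 * n - 1 - i := by omega
    have e2 : n - (1 + (n - 1 - i)) = i := by omega
    rw [e1, e2, mul_comm]
  · refine Finset.sum_congr rfl fun i hi => ?_
    rw [Finset.mem_range] at hi
    have e1 : n + (1 + i) - 1 = n + i := by omega
    have e2 : n - (1 + i) = 2 * n - 1 - (n + i) := by omega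
    rw [e1, e2]

theorem guo_zeng_theorem3_equiv (m n : ℕ) (hm : 0 < m) (hn : 0 < n) (x : ℚ) :
    2 * ∑ a ∈ Finset.Icc 1 m, ∑ b ∈ Finset.Icc 1 n,
      qbinom (x + a - 1) (n + b - 1) * qbinom (x + m - a) (n - b) =
    (m : ℚ) * qbinom (2 * x + m - 1) (2 * n - 1) := by
  set T : ℚ → ℚ → ℚ := fun y z => ∑ b ∈ Finset.Icc 1 n,
    qbinom y (n + b - 1) * qbinom z (n - b) with hT
  have hS : ∑ a ∈ Finset.Icc 1 m, ∑ b ∈ Finset.Icc 1 n,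
      qbinom (x + a - 1) (n + b - 1) * qbinom (x + m - a) (n - b)
      = ∑ i ∈ Finset.range m, T (x + i) (x + m - 1 - i) := by
    rw [show Finset.Icc 1 m = Finset.Ico 1 (m + 1) by rw [Finset.Ico_add_one_right_eq_Icc],
      Finset.sum_Ico_eq_sum_range]
    simp only [add_tsub_cancel_right]
    refine Finset.sum_congr rfl fun i hi => ?_
    have e1 : x + (↑(1 + i) : ℚ) - 1 = x + i := by push_cast; ring
    have e2 : x + m - (↑(1 + i) : ℚ) = x + m - 1 - i := by push_cast; ring
    rw [e1, e2]
  have hS' : ∑ i ∈ Finset.range m, T (x + i) (x + m - 1 - i)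
      = ∑ i ∈ Finset.range m, T (x + m - 1 - i) (x + i) := by
    rw [← Finset.sum_range_reflect]
    refine Finset.sum_congr rfl fun i hi => ?_
    rw [Finset.mem_range] at hi
    have hc : ((m - 1 - i : ℕ) : ℚ) = (m : ℚ) - 1 - i := by
      have h1 : m - 1 - i = m - (1 + i) := by omega
      rw [h1, Nat.cast_sub (by omega)]
      push_cast; ring
    have e1 : x + (↑(m - 1 - i) : ℚ) = x + m - 1 - i := by rw [hc]; ring
    have e2 : x + (m : ℚ) - 1 - (↑(m - 1 - i) : ℚ) = x + i := by rw [hc]; ring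
    rw [e1, e2]
  rw [hS, two_mul]
  nth_rewrite 1 [hS']
  rw [← Finset.sum_add_distrib]
  have key : ∀ i ∈ Finset.range m, T (x + m - 1 - i) (x + i) + T (x + i) (x + m - 1 - i)
      = qbinom (2 * x + m - 1) (2 * n - 1) := by
    intro i _
    have hs := split_lemma (x + m - 1 - i) (x + i) n hn
    rw [show x + (m : ℚ) - 1 - i + (x + i) = 2 * x + m - 1 by ring] at hs
    rw [hT, ← hs, ← Finset.sum_add_distrib]
  rw [Finset.sum_congr rfl key, Finset.sum_const, Finset.card_range, nsmul_eq_mul]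
end
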